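/- Define a(t) = a₀ e^{-iωt - ε²t/(2c)} and u(x,t) = (ε/c) a₀ e^{-(iω + ε²/(2c))(t - x/c)} · 1_{0 < x < ct}. Then the total energy E(t) = |a(t)|² + ∫_ℝ |u(x,t)|² dx is constant in time: E(t) = |a₀|² for all t ≥ 0. -/

import Mathlib

open Complex MeasureTheory

lemma exp_integral_aux (k a b : ℝ) (hk : k ≠ 0) :
    ∫ x in a..b, Real.exp (k * x) = (Real.exp (k * b) - Real.exp (k * a)) / k := by
  have := intervalIntegral.integral_comp_mul_left (a := a) (b := b)
    (fun x => Real.exp x) hk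
  simp only [integral_exp] at this
  rw [this]
  rw [smul_eq_mul]
  field_simp

lemma re_aux (r s : ℝ) (ω : ℝ) : ((-(I * ω + (r : ℂ))) * (s : ℂ)).re = -r * s := by
  rw [mul_comm, Complex.re_ofReal_mul]
  simp [Complex.add_re]
  ring

lemma abs_sq_aux (ω c ε t x : ℝ) (a₀ : ℂ) :
    ‖((ε / c : ℝ) : ℂ) * a₀ *
      Complex.exp (-(I * ω + (ε ^ 2 / (2 * c) : ℝ)) * ((t - x / c : ℝ) : ℂ))‖ ^ 2
      = (ε / c) ^ 2 * ‖a₀‖ ^ 2 *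
        Real.exp (ε ^ 2 / c ^ 2 * x + (-(ε ^ 2 / c) * t)) := by
  rw [norm_mul, norm_mul, Complex.norm_exp, Complex.norm_real, Real.norm_eq_abs, re_aux]
  rw [mul_pow, mul_pow, _root_.sq_abs, ← Real.exp_nat_mul]
  congr 1
  push_cast
  by_cases hc : c = 0
  · simp [hc]
  · field_simp
    ring

theorem oscillator_field_energy_conservation (ω c ε : ℝ) (hc : 0 < c) (a₀ : ℂ) :
    let a : ℝ → ℂ := fun t => a₀ * Complex.exp ((-(I * ω) - (ε ^ 2 / (2 * c) : ℝ)) * t)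
    let u : ℝ → ℝ → ℂ := fun x t =>
      Set.indicator (Set.Ioo (0 : ℝ) (c * t))
        (fun x => ((ε / c : ℝ) : ℂ) * a₀ *
          Complex.exp (-(I * ω + (ε ^ 2 / (2 * c) : ℝ)) * ((t - x / c : ℝ) : ℂ))) x
    ∀ t : ℝ, 0 ≤ t →
      ‖a t‖ ^ 2 + (∫ x : ℝ, ‖u x t‖ ^ 2) = ‖a₀‖ ^ 2 := by
  intro a u t ht
  have hc' : c ≠ 0 := hc.ne'
  -- |a t|^2
  have ha : ‖a t‖ ^ 2 = ‖a₀‖ ^ 2 * Real.exp (-(ε ^ 2 / c) * t) := by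
    show ‖a₀ * Complex.exp _‖ ^ 2 = _
    have he : (-(I * (ω:ℂ)) - ((ε ^ 2 / (2 * c) : ℝ) : ℂ)) = -(I * ω + ((ε ^ 2 / (2 * c) : ℝ) : ℂ)) := by ring
    rw [norm_mul, Complex.norm_exp, mul_pow, ← Real.exp_nat_mul, he, re_aux]
    congr 1
    push_cast
    field_simp
  -- pointwise form of |u x t|^2
  have hu : (fun x : ℝ => ‖u x t‖ ^ 2)
      = Set.indicator (Set.Ioo (0 : ℝ) (c * t))
        (fun x => (ε / c) ^ 2 * ‖a₀‖ ^ 2 *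
          Real.exp (ε ^ 2 / c ^ 2 * x + (-(ε ^ 2 / c) * t))) := by
    funext x
    show ‖Set.indicator _ _ x‖ ^ 2 = _
    by_cases hx : x ∈ Set.Ioo (0 : ℝ) (c * t)
    · rw [Set.indicator_of_mem hx, Set.indicator_of_mem hx]
      exact abs_sq_aux ω c ε t x a₀
    · rw [Set.indicator_of_notMem hx, Set.indicator_of_notMem hx]
      simp
  rw [hu, MeasureTheory.integral_indicator measurableSet_Ioo]
  have hct : (0 : ℝ) ≤ c * t := mul_nonneg hc.le ht
  rw [← MeasureTheory.integral_Ioc_eq_integral_Ioo,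
    ← intervalIntegral.integral_of_le hct]
  by_cases hε : ε = 0
  · subst hε
    simp [ha]
  · have hk : ε ^ 2 / c ^ 2 ≠ 0 := by positivity
    have hsplit : ∫ x in (0:ℝ)..(c*t), (ε / c) ^ 2 * ‖a₀‖ ^ 2 *
          Real.exp (ε ^ 2 / c ^ 2 * x + (-(ε ^ 2 / c) * t))
        = (ε / c) ^ 2 * ‖a₀‖ ^ 2 * Real.exp (-(ε ^ 2 / c) * t) *
          ∫ x in (0:ℝ)..(c*t), Real.exp (ε ^ 2 / c ^ 2 * x) := by
      rw [← intervalIntegral.integral_const_mul]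
      congr 1
      funext x
      rw [Real.exp_add]
      ring
    rw [hsplit, exp_integral_aux _ _ _ hk, ha]
    have h1 : ε ^ 2 / c ^ 2 * (c * t) = ε ^ 2 / c * t := by field_simp
    rw [h1, mul_zero, Real.exp_zero]
    set X := ‖a₀‖ ^ 2
    set E := Real.exp (-(ε ^ 2 / c) * t)
    set F := Real.exp (ε ^ 2 / c * t)
    have hEF : E * F = 1 := by
      rw [← Real.exp_add]; simp
    have h2 : (ε / c) ^ 2 * X * E * ((F - 1) / (ε ^ 2 / c ^ 2)) = X * E * (F - 1) := by
      rw [div_pow]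
      field_simp
    rw [h2]
    linear_combination X * hEF
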